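/- arXiv:2512.19489 — 3 statements merged into one kernel-verified Lean document; each statement's English description precedes it below -/
import Mathlib

section
/- Preservation of absolute continuity under full-row-rank left multiplication (Lemma 2 of the appendix). Let I, I', L be positive integers with I' ≤ I, and let P ∈ ℝ^{I'×I} be a matrix with full row rank, i.e., rank(P) = I'. If μ is a measure on the space of I×L real matrices that is absolutely continuous with respect to Lebesgue (volume) measure, then the pushforward of μ under the map A ↦ P·A is absolutely continuous with respect to Lebesgue (volume) measure on the space of I'×L real matrices. -/
open MeasureTheory

/-- Lebesgue (volume) measure on a real matrix space: the standard product
Lebesgue measure on the entries (inherited from the Pi type). -/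
noncomputable instance matrixMeasureSpace (m n : ℕ) :
    MeasureSpace (Matrix (Fin m) (Fin n) ℝ) :=
  inferInstanceAs (MeasureSpace (Fin m → Fin n → ℝ))

/-- **Lemma 2 (appendix): preservation of absolute continuity under
full-row-rank left multiplication.** -/
theorem pushforward_absolutelyContinuous_of_fullRowRank
    (I I' L : ℕ) (hI : 0 < I) (hI' : 0 < I') (hL : 0 < L) (hle : I' ≤ I)
    (P : Matrix (Fin I') (Fin I) ℝ) (hP : P.rank = I')
    (μ : Measure (Matrix (Fin I) (Fin L) ℝ)) (hμ : μ ≪ volume) :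
    μ.map (fun A => P * A) ≪ (volume : Measure (Matrix (Fin I') (Fin L) ℝ)) := by
  -- P has a right inverse since it has full row rank
  have h1 : Function.Surjective P.mulVecLin := by
    rw [← LinearMap.range_eq_top]
    apply Submodule.eq_top_of_finrank_eq
    rw [← Matrix.rank, hP]
    simp [Module.finrank_pi]
  obtain ⟨Q, hQ⟩ := Matrix.mulVec_surjective_iff_exists_right_inverse.mp
    (fun v => h1 v)
  -- the multiplication map as a linear map between Pi types
  let T : (Fin I → Fin L → ℝ) →ₗ[ℝ] (Fin I' → Fin L → ℝ) :=
    { toFun := fun A => (P * Matrix.of A : Matrix (Fin I') (Fin L) ℝ)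
      map_add' := fun A B => Matrix.mul_add P (Matrix.of A) (Matrix.of B)
      map_smul' := fun c A => Matrix.mul_smul P c (Matrix.of A) }
  have hsurj : Function.Surjective T := by
    intro B
    refine ⟨(Q * Matrix.of B : Matrix (Fin I) (Fin L) ℝ), ?_⟩
    show P * (Q * Matrix.of B) = Matrix.of B
    rw [← Matrix.mul_assoc, hQ, Matrix.one_mul]
  have hTm : Measurable T := T.continuous_of_finiteDimensional.measurable
  have hfm : Measurable (fun A : Matrix (Fin I) (Fin L) ℝ => P * A) := hTm
  obtain ⟨c, hc, hmap⟩ := T.exists_map_addHaar_eq_smul_addHaar volume volume hsurj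
  refine Measure.AbsolutelyContinuous.mk (fun S hS hSvol => ?_)
  rw [Measure.map_apply hfm hS]
  apply hμ
  have h2 : (volume : Measure (Fin I → Fin L → ℝ)) (T ⁻¹' S) = (volume.map T) S :=
    (Measure.map_apply hTm hS).symm
  show (volume : Measure (Fin I → Fin L → ℝ))
    ((fun A : Matrix (Fin I) (Fin L) ℝ => P * A) ⁻¹' S) = 0
  have h3 : ((fun A : Matrix (Fin I) (Fin L) ℝ => P * A) ⁻¹' S) = T ⁻¹' S := rfl
  change (volume : Measure (Fin I → Fin L → ℝ)) (T ⁻¹' S) = 0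
  rw [h2, hmap]
  change (c • (volume : Measure (Fin I' → Fin L → ℝ))) (S : Set (Fin I' → Fin L → ℝ)) = 0
  exact (Measure.smul_apply _ _ _).trans (mul_eq_zero_of_right c hSvol)
end

section
/- Core-tensor and third-factor transfer lemma (the deterministic step (B.3)–(B.6) in the proof of Theorem 1). Let L, M, N, K be positive integers with N ≤ L·M and K ≥ N. Let D, D̄ ∈ ℝ^{L×M×N}, C, C̄ ∈ ℝ^{K×N}, and let Θ_a ∈ ℝ^{L×L}, Θ_b ∈ ℝ^{M×M} be invertible matrices. Assume: (i) the mode-3 unfolding D^(3) ∈ ℝ^{N×(L·M)} of D has rank N; (ii) rank(C) = N; (iii) D̄ ×₁ Θ_a ×₂ Θ_b ×₃ C̄ = D ×₃ C as tensors in ℝ^{L×M×K}. Then rank(C̄) = N, the mode-3 unfolding D̄^(3) of D̄ has rank N, and there exists an invertible matrix Θ_c ∈ ℝ^{N×N} such that C̄ = C·Θ_c and D̄ ×₁ Θ_a ×₂ Θ_b ×₃ Θ_c = D. -/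
/-- Tucker (multilinear) product `D ×₁ A ×₂ B ×₃ C` of a third-order tensor
`D ∈ ℝ^{L×M×N}` with matrices `A ∈ ℝ^{I×L}`, `B ∈ ℝ^{J×M}`, `C ∈ ℝ^{K×N}`. -/
def tucker {L M N I J K : ℕ} (D : Fin L → Fin M → Fin N → ℝ)
    (A : Matrix (Fin I) (Fin L) ℝ) (B : Matrix (Fin J) (Fin M) ℝ)
    (C : Matrix (Fin K) (Fin N) ℝ) : Fin I → Fin J → Fin K → ℝ :=
  fun i j k => ∑ l, ∑ m, ∑ n, D l m n * A i l * B j m * C k n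

/-- Mode-3 unfolding of a third-order tensor `D ∈ ℝ^{L×M×N}`: the `N × (L·M)`
matrix with `D^(3)[n,(l,m)] = D[l,m,n]`. -/
def unfold3 {L M N : ℕ} (D : Fin L → Fin M → Fin N → ℝ) :
    Matrix (Fin N) (Fin L × Fin M) ℝ :=
  Matrix.of fun n lm => D lm.1 lm.2 n

lemma exists_left_inv {K N : ℕ} (A : Matrix (Fin K) (Fin N) ℝ) (h : A.rank = N) :
    ∃ H : Matrix (Fin N) (Fin K) ℝ, H * A = 1 := by
  have hker : LinearMap.ker A.mulVecLin = ⊥ := by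
    have h1 := LinearMap.finrank_range_add_finrank_ker A.mulVecLin
    rw [show Module.finrank ℝ (Fin N → ℝ) = N by simp] at h1
    have : Module.finrank ℝ (LinearMap.ker A.mulVecLin) = 0 := by
      have : Matrix.rank A = Module.finrank ℝ (LinearMap.range A.mulVecLin) := rfl
      omega
    exact Submodule.finrank_eq_zero.mp this
  obtain ⟨g, hg⟩ := A.mulVecLin.exists_leftInverse_of_injective hker
  refine ⟨LinearMap.toMatrix' g, ?_⟩
  apply Matrix.toLin'.injective
  rw [Matrix.toLin'_mul, Matrix.toLin'_toMatrix', Matrix.toLin'_one,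
    Matrix.toLin'_apply']
  exact hg

lemma exists_right_inv {N : ℕ} {P : Type*} [Fintype P] [DecidableEq P]
    (A : Matrix (Fin N) P ℝ) (h : A.rank = N) :
    ∃ G : Matrix P (Fin N) ℝ, A * G = 1 := by
  have hr : LinearMap.range A.mulVecLin = ⊤ := by
    apply Submodule.eq_top_of_finrank_eq
    rw [show Module.finrank ℝ (Fin N → ℝ) = N by simp]
    exact h
  obtain ⟨g, hg⟩ := A.mulVecLin.exists_rightInverse_of_surjective hr
  refine ⟨LinearMap.toMatrix' g, ?_⟩
  apply Matrix.toLin'.injective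
  rw [Matrix.toLin'_mul, Matrix.toLin'_toMatrix', Matrix.toLin'_one,
    Matrix.toLin'_apply']
  exact hg

/-- **Core-tensor and third-factor transfer lemma** (the deterministic step
(B.3)–(B.6) in the proof of Theorem 1). -/
theorem core_and_third_factor_transfer
    (L M N K : ℕ) (hL : 0 < L) (hM : 0 < M) (hN : 0 < N) (hK0 : 0 < K)
    (hNLM : N ≤ L * M) (hKN : K ≥ N)
    (D D' : Fin L → Fin M → Fin N → ℝ)
    (C C' : Matrix (Fin K) (Fin N) ℝ)
    (Θa : Matrix (Fin L) (Fin L) ℝ) (Θb : Matrix (Fin M) (Fin M) ℝ)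
    (ha : IsUnit Θa) (hb : IsUnit Θb)
    (hD : (unfold3 D).rank = N)
    (hC : C.rank = N)
    (heq : tucker D' Θa Θb C' = fun l m k => ∑ n, D l m n * C k n) :
    C'.rank = N ∧ (unfold3 D').rank = N ∧
      ∃ Θc : Matrix (Fin N) (Fin N) ℝ, IsUnit Θc ∧
        C' = C * Θc ∧ tucker D' Θa Θb Θc = D := by
  classical
  set E : Matrix (Fin N) (Fin L × Fin M) ℝ := unfold3 D with hE
  set F : Matrix (Fin N) (Fin L × Fin M) ℝ :=
    Matrix.of fun n lm => ∑ l', ∑ m', D' l' m' n * Θa lm.1 l' * Θb lm.2 m' with hF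
  -- tucker in matrix form
  have hFtucker : ∀ (K0 : ℕ) (C0 : Matrix (Fin K0) (Fin N) ℝ) (l : Fin L) (m : Fin M)
      (k : Fin K0), tucker D' Θa Θb C0 l m k = (C0 * F) k (l, m) := by
    intro K0 C0 l m k
    simp only [tucker, Matrix.mul_apply, hF, Matrix.of_apply, Finset.mul_sum]
    conv_rhs => rw [Finset.sum_comm]
    refine Finset.sum_congr rfl fun l' _ => ?_
    conv_rhs => rw [Finset.sum_comm]
    exact Finset.sum_congr rfl fun m' _ => Finset.sum_congr rfl fun n _ => by ring
  -- the key matrix identity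
  have hCF : C' * F = C * E := by
    ext k lm
    have h1 := congrFun (congrFun (congrFun heq lm.1) lm.2) k
    rw [hFtucker K C' lm.1 lm.2 k] at h1
    rw [h1]
    simp only [Matrix.mul_apply, hE, unfold3, Matrix.of_apply]
    exact Finset.sum_congr rfl fun n _ => by ring
  -- F in terms of unfold3 D'
  have hFD' : F = unfold3 D' * Matrix.transpose (Matrix.kroneckerMap (· * ·) Θa Θb) := by
    ext n lm
    simp only [hF, Matrix.of_apply, Matrix.mul_apply, Matrix.transpose_apply,
      Fintype.sum_prod_type, unfold3, Matrix.kroneckerMap_apply]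
    refine Finset.sum_congr rfl fun l' _ => Finset.sum_congr rfl fun m' _ => by ring
  have hKdet : IsUnit (Matrix.transpose (Matrix.kroneckerMap (· * ·) Θa Θb)).det := by
    rw [Matrix.det_transpose, Matrix.det_kronecker]
    exact ((Matrix.isUnit_iff_isUnit_det Θa).mp ha).pow _ |>.mul
      (((Matrix.isUnit_iff_isUnit_det Θb).mp hb).pow _)
  -- left inverse of C
  obtain ⟨H, hH⟩ := exists_left_inv C hC
  -- rank of C * E is N
  have hCE : (C * E).rank = N := by
    refine le_antisymm ((Matrix.rank_mul_le_right C E).trans_eq hD) ?_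
    have : E.rank ≤ (C * E).rank := by
      have := Matrix.rank_mul_le_right H (C * E)
      rwa [← Matrix.mul_assoc, hH, Matrix.one_mul] at this
    omega
  -- rank of F is N
  have hFrank : F.rank = N := by
    refine le_antisymm (F.rank_le_card_height.trans_eq (by simp)) ?_
    have h2 : (C' * F).rank ≤ F.rank := Matrix.rank_mul_le_right C' F
    rw [hCF, hCE] at h2
    exact h2
  -- rank of unfold3 D'
  have hD'rank : (unfold3 D').rank = N := by
    rw [hFD'] at hFrank
    rwa [Matrix.rank_mul_eq_left_of_isUnit_det _ _ hKdet] at hFrank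
  -- right inverses
  obtain ⟨G, hG⟩ := exists_right_inv F hFrank
  obtain ⟨GE, hGE⟩ := exists_right_inv E hD
  set Θc : Matrix (Fin N) (Fin N) ℝ := E * G with hΘc
  have hC'eq : C' = C * Θc := by
    calc C' = C' * (F * G) := by rw [hG, Matrix.mul_one]
    _ = (C' * F) * G := by rw [Matrix.mul_assoc]
    _ = (C * E) * G := by rw [hCF]
    _ = C * Θc := by rw [hΘc, Matrix.mul_assoc]
  have hΘcF : Θc * F = E := by
    have h3 : C * (Θc * F) = C * E := by
      rw [← Matrix.mul_assoc, ← hC'eq, hCF]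
    calc Θc * F = (H * C) * (Θc * F) := by rw [hH, Matrix.one_mul]
    _ = H * (C * (Θc * F)) := by rw [Matrix.mul_assoc]
    _ = H * (C * E) := by rw [h3]
    _ = (H * C) * E := by rw [Matrix.mul_assoc]
    _ = E := by rw [hH, Matrix.one_mul]
  have hΘcUnit : IsUnit Θc := by
    refine (Matrix.isUnit_iff_isUnit_det Θc).mpr (Matrix.isUnit_det_of_right_inverse (B := F * GE) ?_)
    rw [← Matrix.mul_assoc, hΘcF, hGE]
  have hC'rank : C'.rank = N := by
    rw [hC'eq, Matrix.rank_mul_eq_left_of_isUnit_det _ _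
      ((Matrix.isUnit_iff_isUnit_det Θc).mp hΘcUnit), hC]
  refine ⟨hC'rank, hD'rank, Θc, hΘcUnit, hC'eq, ?_⟩
  funext l m n
  rw [hFtucker N Θc l m n, hΘcF]
  rfl
end

section
/- Generic linear independence of column subsets. Let K, n, s be positive integers with s ≤ K and s ≤ n. For Lebesgue-almost every matrix M ∈ ℝ^{K×n} (with respect to Lebesgue/volume measure on the space of K×n real matrices), every set of s columns of M is linearly independent: for every subset S of column indices with |S| = s, the family of columns (M[:,q])_{q ∈ S} is linearly independent in ℝ^K. -/
open Matrix MeasureTheory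

lemma mv_zero_set_null : ∀ (m : ℕ) (p : MvPolynomial (Fin m) ℝ), p ≠ 0 →
    volume {x : Fin m → ℝ | MvPolynomial.eval x p = 0} = 0 := by
  intro m
  induction m with
  | zero =>
    intro p hp
    obtain ⟨c, rfl⟩ := MvPolynomial.C_surjective (Fin 0) p
    have hc : c ≠ 0 := fun h => hp (by simp [h])
    have h2 : {x : Fin 0 → ℝ | MvPolynomial.eval x (MvPolynomial.C c) = 0} = ∅ := by
      ext x; simp [hc]
    rw [h2]; simp
  | succ m ih =>
    intro p hp
    set q : Polynomial (MvPolynomial (Fin m) ℝ) := MvPolynomial.finSuccEquiv ℝ m p with hq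
    have hq0 : q ≠ 0 := by
      intro h
      apply hp
      have h2 : (MvPolynomial.finSuccEquiv ℝ m) p = (MvPolynomial.finSuccEquiv ℝ m) 0 := by
        rw [map_zero, ← hq]; exact h
      exact (MvPolynomial.finSuccEquiv ℝ m).injective h2
    obtain ⟨k, hk⟩ : ∃ k, q.coeff k ≠ 0 := by
      by_contra h; push_neg at h
      exact hq0 (Polynomial.ext fun k => by simp [h k])
    have hmp := MeasureTheory.volume_preserving_piFinSuccAbove (fun _ : Fin (m + 1) => ℝ) 0
    set e := MeasurableEquiv.piFinSuccAbove (fun _ : Fin (m + 1) => ℝ) 0 with he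
    set Z := {x : Fin (m + 1) → ℝ | MvPolynomial.eval x p = 0} with hZ
    set A : Set (ℝ × (Fin m → ℝ)) :=
      {yt | Polynomial.eval yt.1 (Polynomial.map (MvPolynomial.eval yt.2) q) = 0} with hA
    have hcons : ∀ yt : ℝ × (Fin m → ℝ),
        Polynomial.eval yt.1 (Polynomial.map (MvPolynomial.eval yt.2) q)
          = MvPolynomial.eval (Fin.cons yt.1 yt.2) p := by
      intro yt; rw [hq, ← MvPolynomial.eval_eq_eval_mv_eval']
    have hZA : Z = e ⁻¹' A := by
      ext x
      have hx : e x = (x 0, fun j => x (Fin.succAbove 0 j)) := rfl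
      simp only [hZ, hA, Set.mem_setOf_eq, Set.mem_preimage, hx]
      have hc2 := hcons (x 0, fun j => x (Fin.succAbove 0 j))
      have hxc : (Fin.cons (x 0) (fun j => x (Fin.succAbove 0 j)) : Fin (m+1) → ℝ) = x := by
        ext i
        refine Fin.cases ?_ ?_ i <;> simp [Fin.succAbove]
      rw [hc2, hxc]
    have hAmeas : MeasurableSet A := by
      have hcont : Continuous fun yt : ℝ × (Fin m → ℝ) =>
          Polynomial.eval yt.1 (Polynomial.map (MvPolynomial.eval yt.2) q) := by
        have h2 : Continuous fun yt : ℝ × (Fin m → ℝ) => (Fin.cons yt.1 yt.2 : Fin (m+1) → ℝ) := by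
          refine continuous_pi fun i => ?_
          refine Fin.cases ?_ ?_ i
          · simpa using continuous_fst
          · intro j; simpa [Function.comp_def] using (continuous_apply j).comp continuous_snd
        simpa only [hcons, Function.comp_def] using ((MvPolynomial.continuous_eval (p := p)).comp h2)
      exact (isClosed_singleton.preimage hcont).measurableSet
    have h1 : volume Z = (volume : Measure ℝ).prod (volume : Measure (Fin m → ℝ)) A := by
      rw [hZA]
      rw [hmp.measure_preimage hAmeas.nullMeasurableSet]
      rfl
    rw [h1, Measure.prod_apply_symm hAmeas]
    have hN : volume {t : Fin m → ℝ | MvPolynomial.eval t (q.coeff k) = 0} = 0 :=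
      ih _ hk
    have hae : (fun t : Fin m → ℝ => volume ((fun y => (y, t)) ⁻¹' A)) =ᵐ[volume] 0 := by
      rw [Filter.EventuallyEq, ae_iff]
      refine measure_mono_null ?_ hN
      intro t ht
      simp only [Set.mem_setOf_eq, Pi.zero_apply] at ht ⊢
      by_contra htc
      apply ht
      have hqmap : Polynomial.map (MvPolynomial.eval t) q ≠ 0 := by
        intro h0
        apply htc
        rw [← Polynomial.coeff_map (MvPolynomial.eval t) k, h0, Polynomial.coeff_zero]
      have hfin : ((fun y => (y, t)) ⁻¹' A).Finite := by
        have : ((fun y : ℝ => (y, t)) ⁻¹' A) ⊆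
            {y | Polynomial.IsRoot (Polynomial.map (MvPolynomial.eval t) q) y} := by
          intro y hy; exact hy
        exact (Polynomial.finite_setOf_isRoot hqmap).subset this
      exact hfin.measure_zero volume
    rw [lintegral_congr_ae hae]
    simp

lemma mv_zero_set_null' (ι : Type) [Fintype ι] (p : MvPolynomial ι ℝ) (hp : p ≠ 0) :
    volume {x : ι → ℝ | MvPolynomial.eval x p = 0} = 0 := by
  classical
  set e := Fintype.equivFin ι with he
  set q : MvPolynomial (Fin (Fintype.card ι)) ℝ := MvPolynomial.rename e p with hqdef
  have hq : q ≠ 0 := fun h => hp (MvPolynomial.rename_injective e e.injective (by simpa using h))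
  set T := MeasurableEquiv.arrowCongr' (α₁ := Fin (Fintype.card ι)) (β₁ := ℝ)
    e.symm (MeasurableEquiv.refl ℝ) with hT
  have hmp : MeasurePreserving T volume volume :=
    MeasureTheory.volume_preserving_arrowCongr' e.symm (MeasurableEquiv.refl ℝ)
      (MeasurePreserving.id _)
  have hmeas : MeasurableSet {x : ι → ℝ | MvPolynomial.eval x p = 0} :=
    (isClosed_singleton.preimage (MvPolynomial.continuous_eval p)).measurableSet
  have h1 : T ⁻¹' {x : ι → ℝ | MvPolynomial.eval x p = 0}
      = {y : Fin (Fintype.card ι) → ℝ | MvPolynomial.eval y q = 0} := by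
    ext y
    simp only [Set.mem_preimage, Set.mem_setOf_eq, hqdef, MvPolynomial.eval_rename]
    have : T y = y ∘ e := rfl
    rw [this]
  rw [← hmp.measure_preimage hmeas.nullMeasurableSet, h1]
  exact mv_zero_set_null _ q hq

lemma matrix_poly_null (K n : ℕ) (p : MvPolynomial (Fin K × Fin n) ℝ) (hp : p ≠ 0) :
    volume {M : Fin K → Fin n → ℝ | MvPolynomial.eval (fun q => M q.1 q.2) p = 0} = 0 := by
  classical
  set Ψ : (Fin K → Fin n → ℝ) → (Fin K × Fin n → ℝ) := fun M q => M q.1 q.2 with hΨ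
  have hΨm : Measurable Ψ :=
    measurable_pi_lambda _ fun q => (measurable_pi_apply q.2).comp (measurable_pi_apply q.1)
  have hmp : MeasurePreserving Ψ volume volume := by
    constructor
    · exact hΨm
    · symm
      refine MeasureTheory.Measure.pi_eq fun t ht => ?_
      rw [Measure.map_apply hΨm (MeasurableSet.univ_pi ht)]
      have hpre : Ψ ⁻¹' (Set.pi Set.univ t)
          = Set.pi Set.univ fun i => Set.pi Set.univ fun j => t (i, j) := by
        ext M
        simp only [Set.mem_preimage, Set.mem_univ_pi, hΨ]
        exact ⟨fun h i j => h (i, j), fun h q => h q.1 q.2⟩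
      rw [hpre]
      rw [volume_pi_pi]
      simp_rw [volume_pi_pi]
      exact (Fintype.prod_prod_type fun q => volume (t q)).symm
  have hmeas : MeasurableSet {x : Fin K × Fin n → ℝ | MvPolynomial.eval x p = 0} :=
    (isClosed_singleton.preimage (MvPolynomial.continuous_eval p)).measurableSet
  have h1 : {M : Fin K → Fin n → ℝ | MvPolynomial.eval (fun q => M q.1 q.2) p = 0}
      = Ψ ⁻¹' {x : Fin K × Fin n → ℝ | MvPolynomial.eval x p = 0} := rfl
  rw [h1, hmp.measure_preimage hmeas.nullMeasurableSet]
  exact mv_zero_set_null' _ p hp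

/-- **Generic linear independence of column subsets.** For Lebesgue-almost
every `K × n` real matrix, every set of `s` columns is linearly independent
(provided `s ≤ K` and `s ≤ n`). -/
theorem generic_column_subsets_linearIndependent
    (K n s : ℕ) (hs : 0 < s) (hsK : s ≤ K) (hsn : s ≤ n) :
    ∀ᵐ M : Matrix (Fin K) (Fin n) ℝ ∂volume,
      ∀ S : Finset (Fin n), S.card = s →
        LinearIndependent ℝ (fun q : S => Mᵀ (q : Fin n)) := by
  classical
  rw [MeasureTheory.ae_all_iff]
  intro S
  by_cases hS : S.card = s
  swap
  · exact Filter.Eventually.of_forall fun M h => absurd h hS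
  -- the order iso enumerating S
  set e := S.orderIsoOfFin hS with he
  -- the minor polynomial
  set A : Matrix (Fin s) (Fin s) (MvPolynomial (Fin K × Fin n) ℝ) :=
    Matrix.of fun i j => MvPolynomial.X (Fin.castLE hsK i, ((e j : S) : Fin n)) with hA
  set P : MvPolynomial (Fin K × Fin n) ℝ := A.det with hP
  have hP0 : P ≠ 0 := by
    intro h0
    set x₀ : Fin K × Fin n → ℝ := fun q =>
      if ∃ a : Fin s, Fin.castLE hsK a = q.1 ∧ ((e a : S) : Fin n) = q.2 then 1 else 0 with hx
    have h1 : MvPolynomial.eval x₀ P = (A.map (MvPolynomial.eval x₀)).det :=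
      RingHom.map_det (MvPolynomial.eval x₀) A
    have h2 : A.map (MvPolynomial.eval x₀) = 1 := by
      ext i j
      simp only [Matrix.map_apply, hA, Matrix.of_apply, MvPolynomial.eval_X, hx]
      rw [Matrix.one_apply]
      by_cases hij : i = j
      · subst hij
        rw [if_pos ⟨i, rfl, rfl⟩, if_pos rfl]
      · rw [if_neg, if_neg hij]
        rintro ⟨a, ha1, ha2⟩
        apply hij
        have h3 : a = i := Fin.castLE_injective hsK ha1
        have h4 : a = j := by
          have := Subtype.coe_injective ha2
          exact e.injective this
        rw [← h3, h4]
    rw [h0, map_zero, h2, Matrix.det_one] at h1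
    exact one_ne_zero h1.symm
  have hnull : volume {M : Matrix (Fin K) (Fin n) ℝ |
      MvPolynomial.eval (fun q => M q.1 q.2) P = 0} = 0 :=
    matrix_poly_null K n P hP0
  rw [ae_iff]
  refine measure_mono_null ?_ hnull
  intro M hM
  simp only [Set.mem_setOf_eq] at hM ⊢
  have hdep : ¬ LinearIndependent ℝ (fun q : S => Mᵀ (q : Fin n)) := fun h => hM fun _ => h
  rw [Fintype.not_linearIndependent_iff] at hdep
  obtain ⟨g, hsum, i0, hi0⟩ := hdep
  -- the evaluated minor
  have h1 : MvPolynomial.eval (fun q => M q.1 q.2) P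
      = (A.map (MvPolynomial.eval fun q => M q.1 q.2)).det :=
    RingHom.map_det _ A
  rw [h1]
  rw [← Matrix.exists_mulVec_eq_zero_iff]
  refine ⟨fun j => g (e j), ?_, ?_⟩
  · intro h0
    apply hi0
    have := congrFun h0 (e.symm i0)
    simpa using this
  · ext i
    have h2 : ∀ j : Fin s,
        (A.map (MvPolynomial.eval fun q => M q.1 q.2)) i j = M (Fin.castLE hsK i) (e j) := by
      intro j; simp [hA]
    simp only [Matrix.mulVec, dotProduct, h2, Pi.zero_apply]
    have h3 := congrFun hsum (Fin.castLE hsK i)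
    simp only [Finset.sum_apply, Pi.smul_apply, smul_eq_mul, Pi.zero_apply,
      Matrix.transpose_apply] at h3
    rw [← h3]
    rw [← Equiv.sum_comp e.toEquiv (fun q : S => g q * M (Fin.castLE hsK i) q)]
    refine Finset.sum_congr rfl fun j _ => ?_
    show M (Fin.castLE hsK i) (e j) * g (e j) = g (e j) * M (Fin.castLE hsK i) (e j)
    ring
end
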